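/- Let S be a virtual flat biquandle and A an abelian group. For any function η: S → A, the coboundary φ(a,b) := -η(b) + η(b∘a) + η(a*b) - η(a) satisfies the cocycle condition of the complex C^*_{SF}: for all a, b, c ∈ S, -φ(b,c) + φ(b, c∘a) + φ(a,c) - φ(a, c∘b) = 0. -/
import Mathlib


/-- A virtual flat biquandle: a set with two binary operations
`star a b = S_b(a)` and `circ a b = T_b(a)` satisfying
(i) `S_a S_b = S_b S_a`, `T_a T_b = T_b T_a`, `S_a T_b = T_b S_a`;
(ii) `S_a = S_{T_b(a)} = S_{S_b(a)}`, `T_a = T_{S_b(a)} = T_{T_b(a)}`;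
(iii) `T_a S_a = S_a T_a = id`. -/
structure VFB (S : Type*) where
  star : S → S → S
  circ : S → S → S
  star_star_comm : ∀ a b x, star (star x b) a = star (star x a) b
  circ_circ_comm : ∀ a b x, circ (circ x b) a = circ (circ x a) b
  star_circ_comm : ∀ a b x, star (circ x b) a = circ (star x a) b
  star_circ_invar : ∀ a b x, star x (circ a b) = star x a
  star_star_invar : ∀ a b x, star x (star a b) = star x a
  circ_star_invar : ∀ a b x, circ x (star a b) = circ x a
  circ_circ_invar : ∀ a b x, circ x (circ a b) = circ x a
  circ_star : ∀ a x, circ (star x a) a = x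
  star_circ : ∀ a x, star (circ x a) a = x

theorem stmt_16 {S : Type*} {A : Type*} [AddCommGroup A]
    (V : VFB S) (η : S → A) :
    let φ : S → S → A := fun a b => -η b + η (V.circ b a) + η (V.star a b) - η a
    ∀ a b c : S,
      -φ b c + φ b (V.circ c a) + φ a c - φ a (V.circ c b) = 0 := by
  intro φ a b c
  simp only [φ, V.star_circ_invar, V.circ_circ_comm]
  abel
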